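/- Let A : ℕ → S be a sequence such that for every N ∈ ℕ, writing t = A[N]: (i) n(t,N) = ⌊f(t)·N⌋ or ⌊f(t)·(N+1)⌋ = ⌊f(t)·N⌋ + 1; and (ii) for every integer M with N + 1 ≤ M < min{L ∈ ℕ : ⌊f(t)·L⌋ ≥ n(t,N) + 1}, one has Σ_{s∈S} max{0, ⌊f(s)·M⌋ − n(s,N)} < M − N. Then |f(s)·N − n(s,N)| ≤ 1 for all s ∈ S and all N ∈ ℕ. -/
import Mathlib


open Finset

/-- The number of occurrences of the symbol `s` among the first `N` terms of `x`. -/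
def nOcc {S : Type*} [DecidableEq S] (x : ℕ → S) (s : S) (N : ℕ) : ℕ :=
  ((Finset.range N).filter fun k => x k = s).card

section helpers
variable {S : Type*} [DecidableEq S]

lemma nOcc_succ (A : ℕ → S) (s : S) (N : ℕ) :
    nOcc A s (N+1) = nOcc A s N + if A N = s then 1 else 0 := by
  unfold nOcc
  rw [Finset.range_add_one, Finset.filter_insert]
  split
  · rw [Finset.card_insert_of_notMem (by simp)]
  · simp

lemma nOcc_mono (A : ℕ → S) (s : S) {a b : ℕ} (hab : a ≤ b) :
    nOcc A s a ≤ nOcc A s b :=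
  Finset.card_le_card (Finset.filter_subset_filter _ (Finset.range_subset_range.2 hab))

lemma nOcc_const_of (A : ℕ → S) (s : S) {a b : ℕ} (hab : a ≤ b)
    (h : ∀ j, a ≤ j → j < b → A j ≠ s) : nOcc A s b = nOcc A s a := by
  induction b with
  | zero => rw [Nat.le_zero.mp hab]
  | succ b ih =>
    rcases Nat.lt_or_ge a (b+1) with hlt | hge
    · have hab' : a ≤ b := by omega
      rw [nOcc_succ, if_neg (h b hab' (by omega)), ih hab' (fun j h1 h2 => h j h1 (by omega))]
      simp
    · have : a = b + 1 := by omega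
      rw [this]

lemma sum_nOcc [Fintype S] (A : ℕ → S) (N : ℕ) : ∑ s, nOcc A s N = N := by
  induction N with
  | zero => simp [nOcc]
  | succ N ih => simp [nOcc_succ, Finset.sum_add_distrib, ih, Finset.sum_ite_eq]

lemma exists_occ (A : ℕ → S) (s : S) {a b : ℕ}
    (h : nOcc A s a < nOcc A s b) : ∃ k, a ≤ k ∧ k < b ∧ A k = s := by
  by_contra hc
  push_neg at hc
  have hab : a ≤ b := by
    by_contra hba
    exact absurd (nOcc_mono A s (le_of_not_ge hba)) (by omega)
  rw [nOcc_const_of A s hab hc] at h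
  omega

end helpers

lemma count_lemma {S : Type*} [Fintype S] [DecidableEq S] (f : S → ℝ) (A : ℕ → S) (s : S)
    (N Q : ℕ) (hQ : Q ≤ N + 1)
    (hk : ∀ k, Q ≤ k → k ≤ N → (nOcc A (A k) k : ℤ) + 1 ≤ ⌊f (A k) * ((N : ℝ) + 1)⌋)
    (hs : A N ≠ s)
    (hfl : (nOcc A s N : ℤ) + 1 ≤ ⌊f s * ((N : ℝ) + 1)⌋) :
    (N : ℤ) + 1 - Q + 1 ≤ ∑ v, max 0 (⌊f v * ((N : ℝ) + 1)⌋ - (nOcc A v Q : ℤ)) := by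
  classical
  have per : ∀ v : S, (nOcc A v (N+1) : ℤ) - nOcc A v Q + (if v = s then 1 else 0)
      ≤ max 0 (⌊f v * ((N : ℝ) + 1)⌋ - (nOcc A v Q : ℤ)) := by
    intro v
    by_cases hvs : v = s
    · subst hvs
      rw [if_pos rfl]
      have h1 : nOcc A v (N+1) = nOcc A v N := by
        rw [nOcc_succ, if_neg hs]
        simp
      refine le_max_of_le_right ?_
      have h2 : nOcc A v Q ≤ nOcc A v (N+1) := nOcc_mono A v (by omega)
      omega
    · rw [if_neg hvs]
      by_cases hc : nOcc A v (N+1) ≤ nOcc A v Q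
      · refine le_trans ?_ (le_max_left _ _)
        omega
      · push_neg at hc
        obtain ⟨k0, hk0Q, hk0N, hk0v⟩ := exists_occ A v hc
        have hkex : ∃ k, (Q ≤ k ∧ A k = v) ∧ k ≤ N ∧ ∀ j, k < j → j ≤ N → ¬(Q ≤ j ∧ A j = v) := by
          refine ⟨Nat.findGreatest (fun k => Q ≤ k ∧ A k = v) N, ?_, Nat.findGreatest_le N, ?_⟩
          · exact Nat.findGreatest_spec (P := fun k => Q ≤ k ∧ A k = v) (m := k0) (by omega) ⟨hk0Q, hk0v⟩
          · intro j h1 h2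
            exact Nat.findGreatest_is_greatest h1 h2
        obtain ⟨k, ⟨hkQ, hkv⟩, hkN, hmax⟩ := hkex
        have hconst : nOcc A v (N+1) = nOcc A v (k+1) :=
          nOcc_const_of A v (by omega) (fun j h1 h2 hj =>
            hmax j (by omega) (by omega) ⟨by omega, hj⟩)
        have hstep : nOcc A v (k+1) = nOcc A v k + 1 := by
          rw [nOcc_succ, if_pos hkv]
        have hfloor := hk k hkQ hkN
        rw [hkv] at hfloor
        have hQk : nOcc A v Q ≤ nOcc A v k := nOcc_mono A v hkQ
        refine le_max_of_le_right ?_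
        omega
  have e1 : ∑ v : S, ((nOcc A v (N+1) : ℤ) - nOcc A v Q + (if v = s then 1 else 0))
      = (N : ℤ) + 1 - Q + 1 := by
    rw [Finset.sum_add_distrib, Finset.sum_sub_distrib]
    rw [← Nat.cast_sum, ← Nat.cast_sum, sum_nOcc, sum_nOcc]
    simp [Finset.sum_ite_eq']
  calc (N : ℤ) + 1 - Q + 1 = _ := e1.symm
    _ ≤ _ := Finset.sum_le_sum (fun v _ => per v)

lemma key_lemma {S : Type*} [Fintype S] [DecidableEq S] (f : S → ℝ)
    (hf0 : ∀ s, 0 < f s) (hsum : ∑ s, f s = 1) (A : ℕ → S)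
    (hA2 : ∀ N : ℕ, ∀ M : ℕ, N + 1 ≤ M →
      M < sInf {L : ℕ | (nOcc A (A N) N : ℤ) + 1 ≤ ⌊f (A N) * (L : ℝ)⌋} →
      ∑ s, max 0 (⌊f s * (M : ℝ)⌋ - (nOcc A s N : ℤ)) < (M : ℤ) - (N : ℤ))
    (N : ℕ) (s : S) (hs : A N ≠ s) :
    ⌊f s * ((N : ℝ) + 1)⌋ ≤ (nOcc A s N : ℤ) := by
  classical
  by_contra hcon
  push_neg at hcon
  have hfl : (nOcc A s N : ℤ) + 1 ≤ ⌊f s * ((N : ℝ) + 1)⌋ := hcon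
  by_cases hex : ∃ P, P ≤ N ∧ ⌊f (A P) * ((N : ℝ) + 1)⌋ ≤ (nOcc A (A P) P : ℤ)
  · obtain ⟨P0, hP0N, hP0⟩ := hex
    obtain ⟨P, hPs, hPN, hPmax⟩ : ∃ P, (⌊f (A P) * ((N : ℝ) + 1)⌋ ≤ (nOcc A (A P) P : ℤ))
        ∧ P ≤ N ∧ ∀ j, P < j → j ≤ N → ¬(⌊f (A j) * ((N : ℝ) + 1)⌋ ≤ (nOcc A (A j) j : ℤ)) :=
      ⟨Nat.findGreatest (fun k => ⌊f (A k) * ((N : ℝ) + 1)⌋ ≤ (nOcc A (A k) k : ℤ)) N,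
        Nat.findGreatest_spec (P := fun k => ⌊f (A k) * ((N : ℝ) + 1)⌋ ≤ (nOcc A (A k) k : ℤ)) (m := P0) hP0N hP0, Nat.findGreatest_le N,
        fun j h1 h2 => Nat.findGreatest_is_greatest h1 h2⟩
    have hne : {L : ℕ | (nOcc A (A P) P : ℤ) + 1 ≤ ⌊f (A P) * (L : ℝ)⌋}.Nonempty := by
      refine ⟨⌈((nOcc A (A P) P : ℝ) + 1) / f (A P)⌉₊, ?_⟩
      have h1 : ((nOcc A (A P) P : ℝ) + 1) / f (A P)
          ≤ (⌈((nOcc A (A P) P : ℝ) + 1) / f (A P)⌉₊ : ℝ) := Nat.le_ceil _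
      have h2 : (nOcc A (A P) P : ℝ) + 1
          ≤ f (A P) * (⌈((nOcc A (A P) P : ℝ) + 1) / f (A P)⌉₊ : ℝ) := by
        rw [← div_le_iff₀' (hf0 (A P))]
        exact h1
      show (nOcc A (A P) P : ℤ) + 1 ≤ _
      rw [Int.le_floor]
      push_cast
      exact h2
    have hsinf : N + 1 < sInf {L : ℕ | (nOcc A (A P) P : ℤ) + 1 ≤ ⌊f (A P) * (L : ℝ)⌋} := by
      by_contra hle
      push_neg at hle
      have hmem := Nat.sInf_mem hne
      have hmle : ⌊f (A P) * ((sInf {L : ℕ | (nOcc A (A P) P : ℤ) + 1 ≤ ⌊f (A P) * (L : ℝ)⌋} : ℕ) : ℝ)⌋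
          ≤ ⌊f (A P) * ((N : ℝ) + 1)⌋ := by
        refine Int.floor_le_floor (mul_le_mul_of_nonneg_left ?_ (hf0 (A P)).le)
        exact_mod_cast hle
      simp only [Set.mem_setOf_eq] at hmem
      omega
    have hb := hA2 P (N + 1) (by omega) hsinf
    push_cast at hb
    have hcnt := count_lemma f A s N (P + 1) (by omega)
      (fun k h1 h2 => by
        have := hPmax k (by omega) h2
        omega) hs hfl
    push_cast at hcnt
    have hmono : ∑ v, max 0 (⌊f v * ((N : ℝ) + 1)⌋ - (nOcc A v (P + 1) : ℤ))
        ≤ ∑ v, max 0 (⌊f v * ((N : ℝ) + 1)⌋ - (nOcc A v P : ℤ)) := by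
      refine Finset.sum_le_sum (fun v _ => max_le_max le_rfl ?_)
      have := nOcc_mono A v (by omega : P ≤ P + 1)
      omega
    linarith
  · push_neg at hex
    have hcnt := count_lemma f A s N 0 (by omega)
      (fun k h1 h2 => by have := hex k h2; omega) hs hfl
    have hpos : ∀ v : S, (0 : ℤ) ≤ ⌊f v * ((N : ℝ) + 1)⌋ := fun v =>
      Int.floor_nonneg.mpr (mul_nonneg (hf0 v).le (by positivity))
    have h0 : ∀ v : S, nOcc A v 0 = 0 := fun v => by simp [nOcc]
    simp only [h0, Nat.cast_zero, sub_zero] at hcnt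
    rw [Finset.sum_congr rfl (fun v _ => max_eq_right (hpos v))] at hcnt
    have hsumle : ∑ v, ⌊f v * ((N : ℝ) + 1)⌋ ≤ (N : ℤ) + 1 := by
      have hr : ((∑ v, ⌊f v * ((N : ℝ) + 1)⌋ : ℤ) : ℝ) ≤ (N : ℝ) + 1 := by
        push_cast
        calc ∑ v, ((⌊f v * ((N : ℝ) + 1)⌋ : ℤ) : ℝ) ≤ ∑ v, f v * ((N : ℝ) + 1) :=
              Finset.sum_le_sum (fun v _ => Int.floor_le _)
          _ = (N : ℝ) + 1 := by rw [← Finset.sum_mul, hsum, one_mul]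
      exact_mod_cast hr
    linarith

theorem stmt_7 {S : Type*} [Fintype S] [DecidableEq S] [Nonempty S]
    (f : S → ℝ) (hf0 : ∀ s, 0 < f s) (hf1 : ∀ s, f s ≤ 1)
    (hsum : ∑ s, f s = 1)
    (A : ℕ → S)
    (hA1 : ∀ N : ℕ,
      (nOcc A (A N) N : ℤ) = ⌊f (A N) * (N : ℝ)⌋ ∨
        ⌊f (A N) * ((N : ℝ) + 1)⌋ = ⌊f (A N) * (N : ℝ)⌋ + 1)
    (hA2 : ∀ N : ℕ, ∀ M : ℕ, N + 1 ≤ M →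
      M < sInf {L : ℕ | (nOcc A (A N) N : ℤ) + 1 ≤ ⌊f (A N) * (L : ℝ)⌋} →
      ∑ s, max 0 (⌊f s * (M : ℝ)⌋ - (nOcc A s N : ℤ)) < (M : ℤ) - (N : ℤ)) :
    ∀ (s : S) (N : ℕ), |f s * (N : ℝ) - (nOcc A s N : ℝ)| ≤ 1 := by
  have hstep : ∀ (s : S) (N : ℕ), ⌊f s * ((N : ℝ) + 1)⌋ ≤ ⌊f s * (N : ℝ)⌋ + 1 := by
    intro s N
    have h1 : f s * ((N : ℝ) + 1) ≤ f s * (N : ℝ) + 1 := by nlinarith [hf1 s, hf0 s]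
    calc ⌊f s * ((N : ℝ) + 1)⌋ ≤ ⌊f s * (N : ℝ) + 1⌋ := Int.floor_le_floor h1
      _ = ⌊f s * (N : ℝ)⌋ + 1 := Int.floor_add_one _
  have hmono : ∀ (s : S) (N : ℕ), ⌊f s * (N : ℝ)⌋ ≤ ⌊f s * ((N : ℝ) + 1)⌋ := by
    intro s N
    refine Int.floor_le_floor (mul_le_mul_of_nonneg_left (by linarith) (hf0 s).le)
  have lower : ∀ (N : ℕ) (s : S), ⌊f s * (N : ℝ)⌋ ≤ (nOcc A s N : ℤ) := by
    intro N
    induction N with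
    | zero => intro s; simp [nOcc]
    | succ N ih =>
      intro s
      by_cases hv : A N = s
      · have h1 := ih s
        rw [nOcc_succ, if_pos hv]
        have h2 := hstep s N
        push_cast
        omega
      · rw [nOcc_succ, if_neg hv]
        have := key_lemma f hf0 hsum A hA2 N s hv
        push_cast
        omega
  have upper : ∀ (N : ℕ) (s : S), (nOcc A s N : ℤ) ≤ ⌊f s * (N : ℝ)⌋ + 1 := by
    intro N
    induction N with
    | zero => intro s; simp [nOcc]
    | succ N ih =>
      intro s
      by_cases hv : A N = s
      · have h1 := ih s
        rw [nOcc_succ, if_pos hv]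
        have h2 := hmono s N
        rcases hA1 N with h3 | h3 <;> rw [hv] at h3 <;> push_cast <;> omega
      · rw [nOcc_succ, if_neg hv]
        have h1 := ih s
        have h2 := hmono s N
        push_cast
        omega
  intro s N
  have l := lower N s
  have u := upper N s
  have fl1 : (⌊f s * (N : ℝ)⌋ : ℝ) ≤ f s * (N : ℝ) := Int.floor_le _
  have fl2 : f s * (N : ℝ) < (⌊f s * (N : ℝ)⌋ : ℝ) + 1 := Int.lt_floor_add_one _
  have l' : (⌊f s * (N : ℝ)⌋ : ℝ) ≤ (nOcc A s N : ℝ) := by exact_mod_cast l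
  have u' : (nOcc A s N : ℝ) ≤ (⌊f s * (N : ℝ)⌋ : ℝ) + 1 := by exact_mod_cast u
  rw [abs_le]
  constructor <;> linarith
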